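/- Let R be an invertible n⁴ complex array of real type I admitting a second inverse R̃. For multi-indices I = (i₀,i₁), J = (j₀,j₁), K = (k₀,k₁), L = (l₀,l₁) in {1,…,n}², define 𝐑′^I{}_J{}^K{}_L = Σ_{a,b,c,d} (R⁻¹)^d{}_{k₀}{}^{j₀}{}_a R^{k₁}{}_b{}^a{}_{i₀} R^{i₁}{}_c{}^b{}_{l₁} R̃^c{}_{j₁}{}^{l₀}{}_d and 𝐑^I{}_J{}^K{}_L = Σ_{a,b,c,d} R^{j₀}{}_a{}^d{}_{k₀} R^{k₁}{}_b{}^a{}_{i₀} R^{i₁}{}_c{}^b{}_{l₁} R̃^c{}_{j₁}{}^{l₀}{}_d, and let σ be the involution of {1,…,n}² given by σ(i₀,i₁) = (i₁,i₀). Then 𝐑 is of real type II with respect to σ, i.e. conj(𝐑^I{}_J{}^K{}_L) = 𝐑^{σ(K)}{}_{σ(L)}{}^{σ(I)}{}_{σ(J)}, and 𝐑′ is of antireal type II with respect to σ, i.e. 𝐑′ is invertible and conj(𝐑′^I{}_J{}^K{}_L) = (𝐑′⁻¹)^{σ(I)}{}_{σ(J)}{}^{σ(K)}{}_{σ(L)}.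 -/

import Mathlib

open scoped ComplexConjugate

noncomputable section

/-- An n⁴ array `R^i{}_j{}^k{}_l` viewed as an n²×n² matrix with row index `(i,k)`,
column index `(j,l)`. -/
def toMat (n : ℕ) (R : Fin n → Fin n → Fin n → Fin n → ℂ) :
    Matrix (Fin n × Fin n) (Fin n × Fin n) ℂ :=
  Matrix.of fun p q => R p.1 q.1 p.2 q.2

/-- Entries `(R⁻¹)^i{}_j{}^k{}_l` of the matrix inverse of `R`. -/
def invEntry (n : ℕ) (R : Fin n → Fin n → Fin n → Fin n → ℂ)
    (i j k l : Fin n) : ℂ :=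
  (toMat n R)⁻¹ (i, k) (j, l)

/-- `R` is of real type I: `conj (R^i{}_j{}^k{}_l) = R^l{}_k{}^j{}_i`. -/
def RealTypeI (n : ℕ) (R : Fin n → Fin n → Fin n → Fin n → ℂ) : Prop :=
  ∀ i j k l, conj (R i j k l) = R l k j i

/-- `R` is of antireal type I: `R` invertible and
`conj (R^i{}_j{}^k{}_l) = (R⁻¹)^j{}_i{}^l{}_k`. -/
def AntirealTypeI (n : ℕ) (R : Fin n → Fin n → Fin n → Fin n → ℂ) : Prop :=
  IsUnit (toMat n R) ∧ ∀ i j k l, conj (R i j k l) = invEntry n R j i l k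

/-- `R` is of real type II w.r.t. the involution `σ`:
`conj (R^i{}_j{}^k{}_l) = R^{σk}{}_{σl}{}^{σi}{}_{σj}`. -/
def RealTypeII (n : ℕ) (R : Fin n → Fin n → Fin n → Fin n → ℂ)
    (σ : Fin n → Fin n) : Prop :=
  ∀ i j k l, conj (R i j k l) = R (σ k) (σ l) (σ i) (σ j)

/-- `R` is of antireal type II w.r.t. the involution `σ`: `R` invertible and
`conj (R^i{}_j{}^k{}_l) = (R⁻¹)^{σi}{}_{σj}{}^{σk}{}_{σl}`. -/
def AntirealTypeII (n : ℕ) (R : Fin n → Fin n → Fin n → Fin n → ℂ)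
    (σ : Fin n → Fin n) : Prop :=
  IsUnit (toMat n R) ∧
    ∀ i j k l, conj (R i j k l) = invEntry n R (σ i) (σ j) (σ k) (σ l)

/-- The metric `η` (entries `η^{ij} = η i j`) is `R`-covariant:
`Σ η^{ia} η^{jb} R^k{}_a{}^l{}_b = Σ R^i{}_a{}^j{}_b η^{ak} η^{bl}`. -/
def MetricCovariant (n : ℕ) (R : Fin n → Fin n → Fin n → Fin n → ℂ)
    (η : Matrix (Fin n) (Fin n) ℂ) : Prop :=
  ∀ i j k l, (∑ a : Fin n, ∑ b : Fin n, η i a * η j b * R k a l b) =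
    ∑ a : Fin n, ∑ b : Fin n, R i a j b * η a k * η b l

/-- The metric `η` is real: `conj (η^{ij}) = η_{ji}`, where the lower-index entries
`η_{ij}` are those of the transposed inverse, i.e. `η_{ji} = (η⁻¹) i j`. -/
def MetricReal (n : ℕ) (η : Matrix (Fin n) (Fin n) ℂ) : Prop :=
  ∀ i j, conj (η i j) = η⁻¹ i j

/-- An n⁸ array indexed by multi-indices `I = (i₀,i₁) ∈ {1,…,n}²`, viewed as a
matrix on ℂ^{n²}⊗ℂ^{n²} in the same index convention. -/
def toMat2 (n : ℕ)
    (A : Fin n × Fin n → Fin n × Fin n → Fin n × Fin n → Fin n × Fin n → ℂ) :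
    Matrix ((Fin n × Fin n) × (Fin n × Fin n)) ((Fin n × Fin n) × (Fin n × Fin n)) ℂ :=
  Matrix.of fun p q => A p.1 q.1 p.2 q.2

/-- The q-Minkowski space relations matrix
`𝐑′^I{}_J{}^K{}_L = Σ (R⁻¹)^d{}_{k₀}{}^{j₀}{}_a R^{k₁}{}_b{}^a{}_{i₀}
R^{i₁}{}_c{}^b{}_{l₁} R̃^c{}_{j₁}{}^{l₀}{}_d`. -/
def bigR'mink (n : ℕ) (R Rt : Fin n → Fin n → Fin n → Fin n → ℂ)
    (I J K L : Fin n × Fin n) : ℂ :=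
  ∑ a : Fin n, ∑ b : Fin n, ∑ c : Fin n, ∑ d : Fin n,
    invEntry n R d K.1 J.1 a * R K.2 b a I.1 * R I.2 c b L.2 * Rt c J.2 L.1 d

/-- The q-Minkowski space braiding matrix
`𝐑^I{}_J{}^K{}_L = Σ R^{j₀}{}_a{}^d{}_{k₀} R^{k₁}{}_b{}^a{}_{i₀}
R^{i₁}{}_c{}^b{}_{l₁} R̃^c{}_{j₁}{}^{l₀}{}_d`. -/
def bigRmink (n : ℕ) (R Rt : Fin n → Fin n → Fin n → Fin n → ℂ)
    (I J K L : Fin n × Fin n) : ℂ :=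
  ∑ a : Fin n, ∑ b : Fin n, ∑ c : Fin n, ∑ d : Fin n,
    R J.1 a d K.1 * R K.2 b a I.1 * R I.2 c b L.2 * Rt c J.2 L.1 d


private lemma mulInv (n : ℕ) (R : Fin n → Fin n → Fin n → Fin n → ℂ)
    (hinv : IsUnit (toMat n R)) (p q r s : Fin n) :
    (∑ x : Fin n, ∑ y : Fin n, R p x q y * invEntry n R x r y s)
      = (if p = r then (1:ℂ) else 0) * (if q = s then 1 else 0) := by
  have h : toMat n R * (toMat n R)⁻¹ = 1 :=
    Matrix.mul_nonsing_inv _ ((Matrix.isUnit_iff_isUnit_det _).1 hinv)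
  have h2 := congrFun (congrFun h (p, q)) (r, s)
  simp only [Matrix.mul_apply, Fintype.sum_prod_type, toMat, Matrix.of_apply,
    Matrix.one_apply, Prod.mk.injEq, invEntry] at h2 ⊢
  rw [h2]
  by_cases h3 : p = r <;> by_cases h4 : q = s <;> simp [h3, h4]

private lemma invE_real (n : ℕ) (R : Fin n → Fin n → Fin n → Fin n → ℂ)
    (hinv : IsUnit (toMat n R))
    (hR : ∀ i j k l, conj (R i j k l) = R l k j i) :
    ∀ i j k l, conj (invEntry n R i j k l) = invEntry n R l k j i := by
  have hd := (Matrix.isUnit_iff_isUnit_det _).1 hinv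
  set A := toMat n R with hA
  have hC : A * (Matrix.of fun p q : Fin n × Fin n => conj (A⁻¹ (q.2, q.1) (p.2, p.1))) = 1 := by
    ext p q
    rw [Matrix.mul_apply]
    calc (∑ r : Fin n × Fin n, A p r * Matrix.of (fun p q : Fin n × Fin n => conj (A⁻¹ (q.2, q.1) (p.2, p.1))) r q)
        = ∑ r : Fin n × Fin n, conj (A⁻¹ (q.2,q.1) (r.2,r.1) * A (r.2,r.1) (p.2,p.1)) := by
          refine Finset.sum_congr rfl fun r _ => ?_
          rw [Matrix.of_apply, map_mul]
          have e1 : conj (A (r.2,r.1) (p.2,p.1)) = A p r := by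
            show conj (R r.2 p.2 r.1 p.1) = _
            rw [hR]; rfl
          rw [e1, mul_comm]
      _ = conj (∑ r : Fin n × Fin n, A⁻¹ (q.2,q.1) (r.2,r.1) * A (r.2,r.1) (p.2,p.1)) := by
          rw [map_sum]
      _ = conj (∑ r : Fin n × Fin n, A⁻¹ (q.2,q.1) r * A r (p.2,p.1)) := by
          congr 1
          exact Fintype.sum_equiv (Equiv.prodComm _ _) _ _ (fun r => rfl)
      _ = conj ((A⁻¹ * A) (q.2,q.1) (p.2,p.1)) := by rw [Matrix.mul_apply]
      _ = (1 : Matrix (Fin n × Fin n) (Fin n × Fin n) ℂ) p q := by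
          rw [Matrix.nonsing_inv_mul A hd]
          simp [Matrix.one_apply, Prod.ext_iff, eq_comm, and_comm, apply_ite conj]
  have hinveq := Matrix.inv_eq_right_inv hC
  intro i j k l
  have h5 := congrFun (congrFun hinveq (i,k)) (j,l)
  rw [Matrix.of_apply] at h5
  show conj (A⁻¹ (i,k) (j,l)) = A⁻¹ (l,j) (k,i)
  rw [h5]
  simp

private lemma Rt_real (n : ℕ) (R Rt : Fin n → Fin n → Fin n → Fin n → ℂ)
    (hR : ∀ i j k l, conj (R i j k l) = R l k j i)
    (hRt1 : ∀ i j k l, (∑ a : Fin n, ∑ b : Fin n, Rt i a b j * R a k l b) =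
      (if i = k then (1 : ℂ) else 0) * (if l = j then 1 else 0))
    (hRt2 : ∀ i j k l, (∑ a : Fin n, ∑ b : Fin n, R i a b j * Rt a k l b) =
      (if i = k then (1 : ℂ) else 0) * (if l = j then 1 else 0)) :
    ∀ i j k l, conj (Rt i j k l) = Rt l k j i := by
  set D := Matrix.of (fun p q : Fin n × Fin n => R p.1 q.1 q.2 p.2) with hD
  set Dt := Matrix.of (fun p q : Fin n × Fin n => Rt p.1 q.1 q.2 p.2) with hDt
  have hDtD : Dt * D = 1 := by
    ext p q
    rw [Matrix.mul_apply]
    have : (∑ r : Fin n × Fin n, Dt p r * D r q)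
        = ∑ a : Fin n, ∑ b : Fin n, Rt p.1 a b p.2 * R a q.1 q.2 b := by
      rw [Fintype.sum_prod_type]; rfl
    rw [this, hRt1 p.1 p.2 q.1 q.2]
    by_cases h1 : p.1 = q.1 <;> by_cases h2 : p.2 = q.2 <;>
      simp [Matrix.one_apply, Prod.ext_iff, h1, h2] <;> tauto
  have hDDt : D * Dt = 1 := by
    ext p q
    rw [Matrix.mul_apply]
    have : (∑ r : Fin n × Fin n, D p r * Dt r q)
        = ∑ a : Fin n, ∑ b : Fin n, R p.1 a b p.2 * Rt a q.1 q.2 b := by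
      rw [Fintype.sum_prod_type]; rfl
    rw [this, hRt2 p.1 p.2 q.1 q.2]
    by_cases h1 : p.1 = q.1 <;> by_cases h2 : p.2 = q.2 <;>
      simp [Matrix.one_apply, Prod.ext_iff, h1, h2] <;> tauto
  have hC : (Matrix.of fun p q : Fin n × Fin n => conj (Dt p.swap q.swap)) * D = 1 := by
    ext p q
    rw [Matrix.mul_apply]
    calc (∑ r : Fin n × Fin n,
          Matrix.of (fun p q : Fin n × Fin n => conj (Dt p.swap q.swap)) p r * D r q)
        = ∑ r : Fin n × Fin n, conj (Dt p.swap r.swap * D r.swap q.swap) := by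
          refine Finset.sum_congr rfl fun r _ => ?_
          rw [Matrix.of_apply, map_mul]
          congr 1
          show D r q = conj (D r.swap q.swap)
          show R r.1 q.1 q.2 r.2 = conj (R r.2 q.2 q.1 r.1)
          rw [hR]
      _ = conj (∑ r : Fin n × Fin n, Dt p.swap r.swap * D r.swap q.swap) := by rw [map_sum]
      _ = conj (∑ r : Fin n × Fin n, Dt p.swap r * D r q.swap) := by
          congr 1
          exact Fintype.sum_equiv (Equiv.prodComm _ _) _ _ (fun r => rfl)
      _ = conj ((Dt * D) p.swap q.swap) := by rw [Matrix.mul_apply]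
      _ = (1 : Matrix (Fin n × Fin n) (Fin n × Fin n) ℂ) p q := by
          rw [hDtD]
          simp [Matrix.one_apply, Prod.ext_iff, and_comm, apply_ite conj]
  have hkey : Dt = Matrix.of fun p q : Fin n × Fin n => conj (Dt p.swap q.swap) := by
    have h1 : D⁻¹ = Dt := Matrix.inv_eq_right_inv hDDt
    have h2 := Matrix.inv_eq_left_inv hC
    exact h1.symm.trans h2
  intro i j k l
  have h5 := congrFun (congrFun hkey (i, l)) (j, k)
  rw [Matrix.of_apply] at h5
  have h6 : Rt i j k l = conj (Rt l k j i) := h5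
  rw [h6]
  simp

private lemma sum4 (n : ℕ) (g : Fin n → Fin n → Fin n → Fin n → ℂ) :
    (∑ a : Fin n, ∑ b : Fin n, ∑ c : Fin n, ∑ d : Fin n, g b a d c)
      = ∑ a : Fin n, ∑ b : Fin n, ∑ c : Fin n, ∑ d : Fin n, g a b c d := by
  rw [Finset.sum_comm]
  exact Finset.sum_congr rfl fun a _ => Finset.sum_congr rfl fun b _ => Finset.sum_comm

private lemma collapseA (n : ℕ) (g : Fin n → Fin n → ℂ) (v w : Fin n) :
    (∑ x : Fin n, ∑ y : Fin n, g x y * ((if v = x then (1:ℂ) else 0) * (if y = w then 1 else 0)))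
      = g v w := by
  simp [mul_ite, ite_mul, Finset.sum_ite_eq, Finset.sum_ite_eq']

private lemma collapseB (n : ℕ) (g : Fin n → Fin n → ℂ) (v w : Fin n) (C D : ℂ) :
    (∑ x : Fin n, ∑ y : Fin n, g x y *
        ((C * if v = x then (1:ℂ) else 0) * (D * if y = w then 1 else 0)))
      = g v w * (C * D) := by
  simp [mul_ite, ite_mul, Finset.sum_ite_eq, Finset.sum_ite_eq']
  try ring

set_option maxHeartbeats 1000000 in
private lemma reorder12 (n : ℕ)
    (g : Fin n → Fin n → Fin n → Fin n → Fin n → Fin n → Fin n → Fin n →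
      Fin n → Fin n → Fin n → Fin n → ℂ) :
    (∑ j0 : Fin n, ∑ j1 : Fin n, ∑ l0 : Fin n, ∑ l1 : Fin n, ∑ a2 : Fin n, ∑ b2 : Fin n, ∑ c2 : Fin n, ∑ d2 : Fin n, ∑ a : Fin n, ∑ b : Fin n, ∑ c : Fin n, ∑ d : Fin n, g j0 j1 l0 l1 a2 b2 c2 d2 a b c d)
    = ∑ a : Fin n, ∑ b : Fin n, ∑ d2 : Fin n, ∑ c2 : Fin n, ∑ j0 : Fin n, ∑ d : Fin n, ∑ c : Fin n, ∑ l1 : Fin n, ∑ a2 : Fin n, ∑ b2 : Fin n, ∑ j1 : Fin n, ∑ l0 : Fin n, g j0 j1 l0 l1 a2 b2 c2 d2 a b c d := by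
  have hl : (∑ x : Fin n × Fin n × Fin n × Fin n × Fin n × Fin n × Fin n × Fin n × Fin n × Fin n × Fin n × Fin n, g x.1 x.2.1 x.2.2.1 x.2.2.2.1 x.2.2.2.2.1 x.2.2.2.2.2.1 x.2.2.2.2.2.2.1 x.2.2.2.2.2.2.2.1 x.2.2.2.2.2.2.2.2.1 x.2.2.2.2.2.2.2.2.2.1 x.2.2.2.2.2.2.2.2.2.2.1 x.2.2.2.2.2.2.2.2.2.2.2) = ∑ j0 : Fin n, ∑ j1 : Fin n, ∑ l0 : Fin n, ∑ l1 : Fin n, ∑ a2 : Fin n, ∑ b2 : Fin n, ∑ c2 : Fin n, ∑ d2 : Fin n, ∑ a : Fin n, ∑ b : Fin n, ∑ c : Fin n, ∑ d : Fin n, g j0 j1 l0 l1 a2 b2 c2 d2 a b c d := by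
    simp only [Fintype.sum_prod_type]
  have hr : (∑ x : Fin n × Fin n × Fin n × Fin n × Fin n × Fin n × Fin n × Fin n × Fin n × Fin n × Fin n × Fin n, g x.2.2.2.2.1 x.2.2.2.2.2.2.2.2.2.2.1 x.2.2.2.2.2.2.2.2.2.2.2 x.2.2.2.2.2.2.2.1 x.2.2.2.2.2.2.2.2.1 x.2.2.2.2.2.2.2.2.2.1 x.2.2.2.1 x.2.2.1 x.1 x.2.1 x.2.2.2.2.2.2.1 x.2.2.2.2.2.1) = ∑ a : Fin n, ∑ b : Fin n, ∑ d2 : Fin n, ∑ c2 : Fin n, ∑ j0 : Fin n, ∑ d : Fin n, ∑ c : Fin n, ∑ l1 : Fin n, ∑ a2 : Fin n, ∑ b2 : Fin n, ∑ j1 : Fin n, ∑ l0 : Fin n, g j0 j1 l0 l1 a2 b2 c2 d2 a b c d := by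
    simp only [Fintype.sum_prod_type]
  rw [← hl, ← hr]
  exact Fintype.sum_equiv ⟨fun x => (x.2.2.2.2.2.2.2.2.1, x.2.2.2.2.2.2.2.2.2.1, x.2.2.2.2.2.2.2.1, x.2.2.2.2.2.2.1, x.1, x.2.2.2.2.2.2.2.2.2.2.2, x.2.2.2.2.2.2.2.2.2.2.1, x.2.2.2.1, x.2.2.2.2.1, x.2.2.2.2.2.1, x.2.1, x.2.2.1), fun x => (x.2.2.2.2.1, x.2.2.2.2.2.2.2.2.2.2.1, x.2.2.2.2.2.2.2.2.2.2.2, x.2.2.2.2.2.2.2.1, x.2.2.2.2.2.2.2.2.1, x.2.2.2.2.2.2.2.2.2.1, x.2.2.2.1, x.2.2.1, x.1, x.2.1, x.2.2.2.2.2.2.1, x.2.2.2.2.2.1), fun _ => rfl, fun _ => rfl⟩ _ _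
    (fun x => by simp only [Equiv.coe_fn_mk])


set_option maxHeartbeats 2000000 in
private lemma key (n : ℕ) (R Rt : Fin n → Fin n → Fin n → Fin n → ℂ)
    (hinv : IsUnit (toMat n R))
    (hRt1 : ∀ i j k l, (∑ a : Fin n, ∑ b : Fin n, Rt i a b j * R a k l b) =
      (if i = k then (1 : ℂ) else 0) * (if l = j then 1 else 0))
    (hRt2 : ∀ i j k l, (∑ a : Fin n, ∑ b : Fin n, R i a b j * Rt a k l b) =
      (if i = k then (1 : ℂ) else 0) * (if l = j then 1 else 0))
    (i0 i1 k0 k1 m0 m1 n0 n1 : Fin n) :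
    (∑ j0 : Fin n, ∑ j1 : Fin n, ∑ l0 : Fin n, ∑ l1 : Fin n,
      (∑ a : Fin n, ∑ b : Fin n, ∑ c : Fin n, ∑ d : Fin n,
        invEntry n R d k0 j0 a * R k1 b a i0 * R i1 c b l1 * Rt c j1 l0 d) *
      (∑ a : Fin n, ∑ b : Fin n, ∑ c : Fin n, ∑ d : Fin n,
        invEntry n R a m1 l1 d * R j1 a b l0 * R n0 b c j0 * Rt d n1 m0 c))
    = ((if k1 = n1 then (1:ℂ) else 0) * (if m0 = i0 then (1:ℂ) else 0)) * ((if i1 = m1 then (1:ℂ) else 0) * (if n0 = k0 then (1:ℂ) else 0)) := by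
  have h0 : (∑ j0 : Fin n, ∑ j1 : Fin n, ∑ l0 : Fin n, ∑ l1 : Fin n,
      (∑ a : Fin n, ∑ b : Fin n, ∑ c : Fin n, ∑ d : Fin n,
        invEntry n R d k0 j0 a * R k1 b a i0 * R i1 c b l1 * Rt c j1 l0 d) *
      (∑ a : Fin n, ∑ b : Fin n, ∑ c : Fin n, ∑ d : Fin n,
        invEntry n R a m1 l1 d * R j1 a b l0 * R n0 b c j0 * Rt d n1 m0 c))
      = ∑ j0 : Fin n, ∑ j1 : Fin n, ∑ l0 : Fin n, ∑ l1 : Fin n, ∑ a2 : Fin n, ∑ b2 : Fin n, ∑ c2 : Fin n, ∑ d2 : Fin n, ∑ a : Fin n, ∑ b : Fin n, ∑ c : Fin n, ∑ d : Fin n, (invEntry n R d k0 j0 a * R k1 b a i0 * R i1 c b l1 * Rt c j1 l0 d * (invEntry n R a2 m1 l1 d2 * R j1 a2 b2 l0 * R n0 b2 c2 j0 * Rt d2 n1 m0 c2)) := by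
    simp (config := { maxSteps := 1000000 }) only [Finset.sum_mul, Finset.mul_sum]
  have h2 : (∑ a : Fin n, ∑ b : Fin n, ∑ d2 : Fin n, ∑ c2 : Fin n, ∑ j0 : Fin n, ∑ d : Fin n, ∑ c : Fin n, ∑ l1 : Fin n, ∑ a2 : Fin n, ∑ b2 : Fin n, (invEntry n R d k0 j0 a * R k1 b a i0 * R i1 c b l1 * (invEntry n R a2 m1 l1 d2 * R n0 b2 c2 j0 * Rt d2 n1 m0 c2) * (∑ j1 : Fin n, ∑ l0 : Fin n, Rt c j1 l0 d * R j1 a2 b2 l0))) = ∑ a : Fin n, ∑ b : Fin n, ∑ d2 : Fin n, ∑ c2 : Fin n, ∑ j0 : Fin n, ∑ d : Fin n, ∑ c : Fin n, ∑ l1 : Fin n, ∑ a2 : Fin n, ∑ b2 : Fin n, ∑ j1 : Fin n, ∑ l0 : Fin n, (invEntry n R d k0 j0 a * R k1 b a i0 * R i1 c b l1 * Rt c j1 l0 d * (invEntry n R a2 m1 l1 d2 * R j1 a2 b2 l0 * R n0 b2 c2 j0 * Rt d2 n1 m0 c2)) := by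
    refine Finset.sum_congr rfl fun a _ => Finset.sum_congr rfl fun b _ =>
      Finset.sum_congr rfl fun d2 _ => Finset.sum_congr rfl fun c2 _ =>
      Finset.sum_congr rfl fun j0 _ => Finset.sum_congr rfl fun d _ =>
      Finset.sum_congr rfl fun c _ => Finset.sum_congr rfl fun l1 _ =>
      Finset.sum_congr rfl fun a2 _ => Finset.sum_congr rfl fun b2 _ => ?_
    rw [Finset.mul_sum]
    refine Finset.sum_congr rfl fun j1 _ => ?_
    rw [Finset.mul_sum]
    exact Finset.sum_congr rfl fun l0 _ => by ring
  rw [h0, reorder12 n (fun j0 j1 l0 l1 a2 b2 c2 d2 a b c d => invEntry n R d k0 j0 a * R k1 b a i0 * R i1 c b l1 * Rt c j1 l0 d * (invEntry n R a2 m1 l1 d2 * R j1 a2 b2 l0 * R n0 b2 c2 j0 * Rt d2 n1 m0 c2)), ← h2]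
  have s1 : (∑ a : Fin n, ∑ b : Fin n, ∑ d2 : Fin n, ∑ c2 : Fin n, ∑ j0 : Fin n, ∑ d : Fin n, ∑ c : Fin n, ∑ l1 : Fin n, ∑ a2 : Fin n, ∑ b2 : Fin n, (invEntry n R d k0 j0 a * R k1 b a i0 * R i1 c b l1 * (invEntry n R a2 m1 l1 d2 * R n0 b2 c2 j0 * Rt d2 n1 m0 c2) * (∑ j1 : Fin n, ∑ l0 : Fin n, Rt c j1 l0 d * R j1 a2 b2 l0))) = ∑ a : Fin n, ∑ b : Fin n, ∑ d2 : Fin n, ∑ c2 : Fin n, ∑ j0 : Fin n, ∑ d : Fin n, ∑ c : Fin n, ∑ l1 : Fin n, (invEntry n R d k0 j0 a * R k1 b a i0 * R i1 c b l1 * (invEntry n R c m1 l1 d2 * R n0 d c2 j0 * Rt d2 n1 m0 c2)) := by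
    refine Finset.sum_congr rfl fun a _ => Finset.sum_congr rfl fun b _ =>
      Finset.sum_congr rfl fun d2 _ => Finset.sum_congr rfl fun c2 _ =>
      Finset.sum_congr rfl fun j0 _ => Finset.sum_congr rfl fun d _ =>
      Finset.sum_congr rfl fun c _ => Finset.sum_congr rfl fun l1 _ => ?_
    simp only [hRt1]
    exact collapseA n (fun a2 b2 => invEntry n R d k0 j0 a * R k1 b a i0 * R i1 c b l1 *
      (invEntry n R a2 m1 l1 d2 * R n0 b2 c2 j0 * Rt d2 n1 m0 c2)) c d
  have s2 : (∑ a : Fin n, ∑ b : Fin n, ∑ d2 : Fin n, ∑ c2 : Fin n, ∑ j0 : Fin n, ∑ d : Fin n, ∑ c : Fin n, ∑ l1 : Fin n, (invEntry n R d k0 j0 a * R k1 b a i0 * R i1 c b l1 * (invEntry n R c m1 l1 d2 * R n0 d c2 j0 * Rt d2 n1 m0 c2))) = ∑ a : Fin n, ∑ b : Fin n, ∑ d2 : Fin n, ∑ c2 : Fin n, ∑ j0 : Fin n, ∑ d : Fin n, (invEntry n R d k0 j0 a * R k1 b a i0 * (R n0 d c2 j0 * Rt d2 n1 m0 c2) *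 ((if i1 = m1 then (1:ℂ) else 0) * (if b = d2 then (1:ℂ) else 0))) := by
    refine Finset.sum_congr rfl fun a _ => Finset.sum_congr rfl fun b _ =>
      Finset.sum_congr rfl fun d2 _ => Finset.sum_congr rfl fun c2 _ =>
      Finset.sum_congr rfl fun j0 _ => Finset.sum_congr rfl fun d _ => ?_
    calc (∑ c : Fin n, ∑ l1 : Fin n, (invEntry n R d k0 j0 a * R k1 b a i0 * R i1 c b l1 *
            (invEntry n R c m1 l1 d2 * R n0 d c2 j0 * Rt d2 n1 m0 c2)))
        = ∑ c : Fin n, ∑ l1 : Fin n, ((invEntry n R d k0 j0 a * R k1 b a i0 *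
            (R n0 d c2 j0 * Rt d2 n1 m0 c2)) * (R i1 c b l1 * invEntry n R c m1 l1 d2)) :=
          Finset.sum_congr rfl fun c _ => Finset.sum_congr rfl fun l1 _ => by ring
      _ = (invEntry n R d k0 j0 a * R k1 b a i0 * (R n0 d c2 j0 * Rt d2 n1 m0 c2)) *
            (∑ c : Fin n, ∑ l1 : Fin n, R i1 c b l1 * invEntry n R c m1 l1 d2) := by
          simp only [← Finset.mul_sum]
      _ = invEntry n R d k0 j0 a * R k1 b a i0 * (R n0 d c2 j0 * Rt d2 n1 m0 c2) *
            ((if i1 = m1 then (1:ℂ) else 0) * (if b = d2 then (1:ℂ) else 0)) := by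
          rw [mulInv n R hinv i1 b m1 d2]
  have s3 : (∑ a : Fin n, ∑ b : Fin n, ∑ d2 : Fin n, ∑ c2 : Fin n, ∑ j0 : Fin n, ∑ d : Fin n, (invEntry n R d k0 j0 a * R k1 b a i0 * (R n0 d c2 j0 * Rt d2 n1 m0 c2) * ((if i1 = m1 then (1:ℂ) else 0) * (if b = d2 then (1:ℂ) else 0)))) = ∑ a : Fin n, ∑ b : Fin n, ∑ d2 : Fin n, ∑ c2 : Fin n, (R k1 b a i0 * Rt d2 n1 m0 c2 * (((if i1 = m1 then (1:ℂ) else 0) * (if b = d2 then (1:ℂ) else 0)) * ((if n0 = k0 then (1:ℂ) else 0) * (if c2 = a then (1:ℂ) else 0)))) := by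
    refine Finset.sum_congr rfl fun a _ => Finset.sum_congr rfl fun b _ =>
      Finset.sum_congr rfl fun d2 _ => Finset.sum_congr rfl fun c2 _ => ?_
    calc (∑ j0 : Fin n, ∑ d : Fin n, (invEntry n R d k0 j0 a * R k1 b a i0 *
            (R n0 d c2 j0 * Rt d2 n1 m0 c2) *
            ((if i1 = m1 then (1:ℂ) else 0) * (if b = d2 then (1:ℂ) else 0))))
        = ∑ d : Fin n, ∑ j0 : Fin n, (invEntry n R d k0 j0 a * R k1 b a i0 *
            (R n0 d c2 j0 * Rt d2 n1 m0 c2) *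
            ((if i1 = m1 then (1:ℂ) else 0) * (if b = d2 then (1:ℂ) else 0))) :=
          Finset.sum_comm
      _ = ∑ d : Fin n, ∑ j0 : Fin n, ((R k1 b a i0 * Rt d2 n1 m0 c2 *
            ((if i1 = m1 then (1:ℂ) else 0) * (if b = d2 then (1:ℂ) else 0))) *
            (R n0 d c2 j0 * invEntry n R d k0 j0 a)) :=
          Finset.sum_congr rfl fun d _ => Finset.sum_congr rfl fun j0 _ => by ring
      _ = (R k1 b a i0 * Rt d2 n1 m0 c2 *
            ((if i1 = m1 then (1:ℂ) else 0) * (if b = d2 then (1:ℂ) else 0))) *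
            (∑ d : Fin n, ∑ j0 : Fin n, R n0 d c2 j0 * invEntry n R d k0 j0 a) := by
          simp only [← Finset.mul_sum]
      _ = (R k1 b a i0 * Rt d2 n1 m0 c2 *
            ((if i1 = m1 then (1:ℂ) else 0) * (if b = d2 then (1:ℂ) else 0))) *
            ((if n0 = k0 then (1:ℂ) else 0) * (if c2 = a then (1:ℂ) else 0)) := by
          rw [mulInv n R hinv n0 c2 k0 a]
      _ = R k1 b a i0 * Rt d2 n1 m0 c2 *
            (((if i1 = m1 then (1:ℂ) else 0) * (if b = d2 then (1:ℂ) else 0)) *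
             ((if n0 = k0 then (1:ℂ) else 0) * (if c2 = a then (1:ℂ) else 0))) := by
          ring
  have s4 : (∑ a : Fin n, ∑ b : Fin n, ∑ d2 : Fin n, ∑ c2 : Fin n, (R k1 b a i0 * Rt d2 n1 m0 c2 * (((if i1 = m1 then (1:ℂ) else 0) * (if b = d2 then (1:ℂ) else 0)) * ((if n0 = k0 then (1:ℂ) else 0) * (if c2 = a then (1:ℂ) else 0))))) = ∑ a : Fin n, ∑ b : Fin n, (R k1 b a i0 * Rt b n1 m0 a * ((if i1 = m1 then (1:ℂ) else 0) * (if n0 = k0 then (1:ℂ) else 0))) := by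
    refine Finset.sum_congr rfl fun a _ => Finset.sum_congr rfl fun b _ => ?_
    exact collapseB n (fun d2 c2 => R k1 b a i0 * Rt d2 n1 m0 c2) b a
      (if i1 = m1 then (1:ℂ) else 0) (if n0 = k0 then (1:ℂ) else 0)
  have s5 : (∑ a : Fin n, ∑ b : Fin n, (R k1 b a i0 * Rt b n1 m0 a * ((if i1 = m1 then (1:ℂ) else 0) * (if n0 = k0 then (1:ℂ) else 0)))) = ((if k1 = n1 then (1:ℂ) else 0) * (if m0 = i0 then (1:ℂ) else 0)) * ((if i1 = m1 then (1:ℂ) else 0) * (if n0 = k0 then (1:ℂ) else 0)) := by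
    calc (∑ a : Fin n, ∑ b : Fin n, (R k1 b a i0 * Rt b n1 m0 a * ((if i1 = m1 then (1:ℂ) else 0) * (if n0 = k0 then (1:ℂ) else 0))))
        = (∑ a : Fin n, ∑ b : Fin n, R k1 b a i0 * Rt b n1 m0 a) *
            ((if i1 = m1 then (1:ℂ) else 0) * (if n0 = k0 then (1:ℂ) else 0)) := by
          simp only [← Finset.sum_mul]
      _ = (∑ b : Fin n, ∑ a : Fin n, R k1 b a i0 * Rt b n1 m0 a) *
            ((if i1 = m1 then (1:ℂ) else 0) * (if n0 = k0 then (1:ℂ) else 0)) := by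
          rw [Finset.sum_comm]
      _ = ((if k1 = n1 then (1:ℂ) else 0) * (if m0 = i0 then (1:ℂ) else 0)) * ((if i1 = m1 then (1:ℂ) else 0) * (if n0 = k0 then (1:ℂ) else 0)) := by rw [hRt2 k1 i0 n1 m0]
  rw [s1, s2, s3, s4, s5]


private lemma part1 (n : ℕ) (R Rt : Fin n → Fin n → Fin n → Fin n → ℂ)
    (hR : ∀ i j k l, conj (R i j k l) = R l k j i)
    (hRtre : ∀ i j k l, conj (Rt i j k l) = Rt l k j i)
    (I J K L : Fin n × Fin n) :
    conj (bigRmink n R Rt I J K L) = bigRmink n R Rt K.swap L.swap I.swap J.swap := by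
  obtain ⟨i0, i1⟩ := I; obtain ⟨j0, j1⟩ := J; obtain ⟨k0, k1⟩ := K; obtain ⟨l0, l1⟩ := L
  simp only [bigRmink, map_sum, map_mul, hR, hRtre, Prod.swap_prod_mk]
  refine Eq.trans ?_ (sum4 n _)
  refine Finset.sum_congr rfl fun a _ => Finset.sum_congr rfl fun b _ =>
    Finset.sum_congr rfl fun c _ => Finset.sum_congr rfl fun d _ => ?_
  ring

private lemma conjR' (n : ℕ) (R Rt : Fin n → Fin n → Fin n → Fin n → ℂ)
    (hR : ∀ i j k l, conj (R i j k l) = R l k j i)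
    (hRtre : ∀ i j k l, conj (Rt i j k l) = Rt l k j i)
    (hEre : ∀ i j k l, conj (invEntry n R i j k l) = invEntry n R l k j i)
    (I J K L : Fin n × Fin n) :
    conj (bigR'mink n R Rt I J K L)
      = ∑ a : Fin n, ∑ b : Fin n, ∑ c : Fin n, ∑ d : Fin n,
          invEntry n R a J.1 K.1 d * R I.1 a b K.2 * R L.2 b c I.2 * Rt d L.1 J.2 c := by
  simp only [bigR'mink, map_sum, map_mul, hR, hRtre, hEre]

private lemma mainInv (n : ℕ) (R Rt : Fin n → Fin n → Fin n → Fin n → ℂ)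
    (hinv : IsUnit (toMat n R))
    (hR : ∀ i j k l, conj (R i j k l) = R l k j i)
    (hRt1 : ∀ i j k l, (∑ a : Fin n, ∑ b : Fin n, Rt i a b j * R a k l b) =
      (if i = k then (1 : ℂ) else 0) * (if l = j then 1 else 0))
    (hRt2 : ∀ i j k l, (∑ a : Fin n, ∑ b : Fin n, R i a b j * Rt a k l b) =
      (if i = k then (1 : ℂ) else 0) * (if l = j then 1 else 0)) :
    toMat2 n (bigR'mink n R Rt) *
      (Matrix.of fun p q : (Fin n × Fin n) × (Fin n × Fin n) =>
        conj (bigR'mink n R Rt p.1.swap q.1.swap p.2.swap q.2.swap)) = 1 := by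
  have hRtre := Rt_real n R Rt hR hRt1 hRt2
  have hEre := invE_real n R hinv hR
  ext p q
  obtain ⟨⟨i0, i1⟩, ⟨k0, k1⟩⟩ := p
  obtain ⟨⟨m0, m1⟩, ⟨n0, n1⟩⟩ := q
  rw [Matrix.mul_apply]
  calc (∑ r : (Fin n × Fin n) × (Fin n × Fin n),
          toMat2 n (bigR'mink n R Rt) ((i0, i1), (k0, k1)) r *
          Matrix.of (fun p q : (Fin n × Fin n) × (Fin n × Fin n) =>
            conj (bigR'mink n R Rt p.1.swap q.1.swap p.2.swap q.2.swap)) r ((m0, m1), (n0, n1)))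
      = ∑ j0 : Fin n, ∑ j1 : Fin n, ∑ l0 : Fin n, ∑ l1 : Fin n,
          bigR'mink n R Rt (i0, i1) (j0, j1) (k0, k1) (l0, l1) *
          conj (bigR'mink n R Rt (j1, j0) (m1, m0) (l1, l0) (n1, n0)) := by
        simp only [toMat2, Matrix.of_apply, Fintype.sum_prod_type, Prod.swap_prod_mk]
    _ = ∑ j0 : Fin n, ∑ j1 : Fin n, ∑ l0 : Fin n, ∑ l1 : Fin n,
        (∑ a : Fin n, ∑ b : Fin n, ∑ c : Fin n, ∑ d : Fin n,
          invEntry n R d k0 j0 a * R k1 b a i0 * R i1 c b l1 * Rt c j1 l0 d) *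
        (∑ a : Fin n, ∑ b : Fin n, ∑ c : Fin n, ∑ d : Fin n,
          invEntry n R a m1 l1 d * R j1 a b l0 * R n0 b c j0 * Rt d n1 m0 c) := by
        simp only [conjR' n R Rt hR hRtre hEre]
        simp only [bigR'mink]
    _ = ((if k1 = n1 then (1:ℂ) else 0) * (if m0 = i0 then (1:ℂ) else 0)) *
        ((if i1 = m1 then (1:ℂ) else 0) * (if n0 = k0 then (1:ℂ) else 0)) :=
        key n R Rt hinv hRt1 hRt2 i0 i1 k0 k1 m0 m1 n0 n1
    _ = (1 : Matrix ((Fin n × Fin n) × (Fin n × Fin n)) ((Fin n × Fin n) × (Fin n × Fin n)) ℂ)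
          ((i0, i1), (k0, k1)) ((m0, m1), (n0, n1)) := by
        by_cases h1 : i0 = m0 <;> by_cases h2 : i1 = m1 <;>
          by_cases h3 : k0 = n0 <;> by_cases h4 : k1 = n1 <;>
          simp [Matrix.one_apply, Prod.ext_iff, h1, h2, h3, h4, eq_comm]

/-- if `R` is invertible of real type I with a second inverse `R̃`,
then the q-Minkowski braiding `𝐑` is of real type II and the relations matrix `𝐑′`
is of antireal type II, both w.r.t. the involution `σ(i₀,i₁) = (i₁,i₀)` of
`{1,…,n}²`. -/
theorem stmt8 (n : ℕ) (hn : 1 ≤ n)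
    (R : Fin n → Fin n → Fin n → Fin n → ℂ)
    (hinv : IsUnit (toMat n R)) (hR : RealTypeI n R)
    (Rt : Fin n → Fin n → Fin n → Fin n → ℂ)
    (hRt1 : ∀ i j k l, (∑ a : Fin n, ∑ b : Fin n, Rt i a b j * R a k l b) =
      (if i = k then (1 : ℂ) else 0) * (if l = j then 1 else 0))
    (hRt2 : ∀ i j k l, (∑ a : Fin n, ∑ b : Fin n, R i a b j * Rt a k l b) =
      (if i = k then (1 : ℂ) else 0) * (if l = j then 1 else 0)) :
    (∀ I J K L : Fin n × Fin n,
      conj (bigRmink n R Rt I J K L) =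
        bigRmink n R Rt K.swap L.swap I.swap J.swap) ∧
    IsUnit (toMat2 n (bigR'mink n R Rt)) ∧
    (∀ I J K L : Fin n × Fin n,
      conj (bigR'mink n R Rt I J K L) =
        (toMat2 n (bigR'mink n R Rt))⁻¹ (I.swap, K.swap) (J.swap, L.swap)) := by
  have hR' : ∀ i j k l, conj (R i j k l) = R l k j i := hR
  have hRtre := Rt_real n R Rt hR' hRt1 hRt2
  have hmain := mainInv n R Rt hinv hR' hRt1 hRt2
  refine ⟨fun I J K L => part1 n R Rt hR' hRtre I J K L,
    (Matrix.isUnit_iff_isUnit_det _).2 (Matrix.isUnit_det_of_right_inverse hmain), fun I J K L => ?_⟩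
  rw [Matrix.inv_eq_right_inv hmain, Matrix.of_apply]
  simp only [Prod.swap_swap]
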